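/- arXiv:1407.3589 — 4 statements merged into one kernel-verified Lean document; each statement's English description precedes it below -/
import Mathlib

section
/- Let K be a sextic field (degree 6 over Q) containing no quadratic subfield, and let K₁ be a field of degree at most 2 over Q. Then there is no injective Q-algebra homomorphism from K into the matrix algebra M₃(K₁). -/
/-- Let `K` be a sextic field (degree 6 over `ℚ`) containing no quadratic subfield, and let
`K₁` be a field of degree at most 2 over `ℚ`. Then there is no injective `ℚ`-algebra
homomorphism from `K` into the matrix algebra `M₃(K₁)`. -/
theorem no_embedding_sextic_into_matrix (K K₁ : Type*) [Field K] [Algebra ℚ K]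
    [Field K₁] [Algebra ℚ K₁] [FiniteDimensional ℚ K₁]
    (h6 : Module.finrank ℚ K = 6)
    (hnosub : ∀ L : IntermediateField ℚ K, Module.finrank ℚ L ≠ 2)
    (h2 : Module.finrank ℚ K₁ ≤ 2) :
    ¬∃ f : K →ₐ[ℚ] Matrix (Fin 3) (Fin 3) K₁, Function.Injective f := by
  rintro ⟨f, hf⟩
  set M := Matrix (Fin 3) (Fin 3) K₁
  haveI : FiniteDimensional ℚ K := Module.finite_of_finrank_eq_succ h6
  haveI : FiniteDimensional ℚ M := Module.Finite.trans K₁ M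
  obtain ⟨β, hβ⟩ := Field.exists_primitive_element ℚ K
  set x : M := f β with hxdef
  -- the K₁-span of powers of x
  set W : Submodule K₁ M := Submodule.span K₁ (Set.range fun i : Fin 3 => x ^ (i : ℕ)) with hW
  -- every K₁-polynomial in x lies in W
  have key : ∀ q : Polynomial K₁, Polynomial.aeval x q ∈ W := by
    intro q
    have hmonic : x.charpoly.Monic := x.charpoly_monic
    have hdeg : x.charpoly.natDegree = 3 := by
      simpa using x.charpoly_natDegree_eq_dim
    have h₁ : Polynomial.aeval x (q %ₘ x.charpoly) = Polynomial.aeval x q :=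
      Polynomial.aeval_modByMonic_eq_self_of_root x.aeval_self_charpoly
    rw [← h₁]
    have hlt : (q %ₘ x.charpoly).natDegree < 3 := by
      rcases eq_or_ne (q %ₘ x.charpoly) 0 with h0 | h0
      · simp [h0]
      · refine (Polynomial.natDegree_lt_iff_degree_lt h0).2 ?_
        have := Polynomial.degree_modByMonic_lt q hmonic
        rwa [Polynomial.degree_eq_natDegree hmonic.ne_zero, hdeg] at this
    rw [Polynomial.aeval_eq_sum_range' hlt]
    refine Submodule.sum_mem _ fun i hi => Submodule.smul_mem _ _ ?_
    refine Submodule.subset_span ⟨⟨i, Finset.mem_range.mp hi⟩, rfl⟩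
  -- the range of f is contained in W
  have htop : Algebra.adjoin ℚ ({β} : Set K) = ⊤ := by
    have h1 := IntermediateField.adjoin_simple_toSubalgebra_of_isAlgebraic
      (F := ℚ) (α := β) (IsIntegral.of_finite ℚ β).isAlgebraic
    rw [← h1, hβ, IntermediateField.top_toSubalgebra]
  have hrange' : f.range.toSubmodule ≤ W.restrictScalars ℚ := by
    rintro y ⟨k, rfl⟩
    have hk : k ∈ Algebra.adjoin ℚ ({β} : Set K) := htop ▸ Algebra.mem_top
    rw [Algebra.adjoin_singleton_eq_range_aeval] at hk
    obtain ⟨p, hp⟩ := hk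
    replace hp : Polynomial.aeval β p = k := hp
    have hfk : f k = Polynomial.aeval x (p.map (algebraMap ℚ K₁)) := by
      rw [Polynomial.aeval_map_algebraMap, ← hp, Polynomial.aeval_algHom_apply]
    show f k ∈ W
    rw [hfk]
    exact key _
  -- dimension counting
  have h6' : Module.finrank ℚ (↥f.range) = 6 := by
    rw [← h6]
    exact ((AlgEquiv.ofInjective f hf).toLinearEquiv.finrank_eq).symm
  have hWd : Module.finrank K₁ W ≤ 3 := by
    simpa [Set.finrank] using finrank_range_le_card (R := K₁) (fun i : Fin 3 => x ^ (i : ℕ))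
  haveI : Module.Finite K₁ ↥(W.restrictScalars ℚ) :=
    Module.Finite.equiv (Submodule.restrictScalarsEquiv ℚ K₁ M W).symm
  haveI : Module.Free K₁ ↥(W.restrictScalars ℚ) := Module.Free.of_divisionRing K₁ _
  have hWQ : Module.finrank ℚ (W.restrictScalars ℚ) =
      Module.finrank ℚ K₁ * Module.finrank K₁ W := by
    rw [← Module.finrank_mul_finrank ℚ K₁ (↥(W.restrictScalars ℚ)),
      (Submodule.restrictScalarsEquiv ℚ K₁ M W).finrank_eq]
  have hle6 : (6 : ℕ) ≤ Module.finrank ℚ (W.restrictScalars ℚ) := by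
    rw [← h6']
    exact Submodule.finrank_mono hrange'
  have hr1 : 0 < Module.finrank ℚ K₁ := Module.finrank_pos
  have hr2 : Module.finrank ℚ K₁ = 2 := by
    rcases Nat.lt_or_ge (Module.finrank ℚ K₁) 2 with h | h
    · exfalso
      have : Module.finrank ℚ K₁ = 1 := le_antisymm (by omega) hr1
      rw [hWQ, this, one_mul] at hle6
      omega
    · omega
  -- hence W has ℚ-dimension 6, so f.range = W
  have hW6 : Module.finrank ℚ (W.restrictScalars ℚ) ≤ 6 := by
    rw [hWQ, hr2]
    omega
  have heq : f.range.toSubmodule = W.restrictScalars ℚ :=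
    Submodule.eq_of_le_of_finrank_le hrange' (hW6.trans (le_of_eq h6'.symm))
  -- the scalar matrices lie in the range of f
  have hscal : ∀ c : K₁, algebraMap K₁ M c ∈ f.range := by
    intro c
    have h1 : algebraMap K₁ M c ∈ W := by
      rw [Algebra.algebraMap_eq_smul_one]
      refine Submodule.smul_mem _ _ (Submodule.subset_span ⟨(0 : Fin 3), ?_⟩)
      simp
    have : algebraMap K₁ M c ∈ f.range.toSubmodule := by
      rw [heq, Submodule.restrictScalars_mem]
      exact h1
    exact this
  -- build an embedding of K₁ into K
  let e : K ≃ₐ[ℚ] f.range := AlgEquiv.ofInjective f hf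
  let h₀ : K₁ →ₐ[ℚ] M := IsScalarTower.toAlgHom ℚ K₁ M
  let g : K₁ →ₐ[ℚ] K := e.symm.toAlgHom.comp (h₀.codRestrict f.range hscal)
  -- its field range is a quadratic subfield of K, contradiction
  have hfin : Module.finrank ℚ (↥g.fieldRange) = 2 := by
    rw [← hr2]
    exact ((AlgEquiv.ofInjective g g.toRingHom.injective).toLinearEquiv.finrank_eq).symm
  exact hnosub g.fieldRange hfin
end

section
/- Let R be a maximal order in the quaternion algebra B_{p,∞} over Q ramified exactly at p and ∞. If k₁, k₂ ∈ R have reduced norms Nrd(k₁), Nrd(k₂) < √p / 2, then k₁ k₂ = k₂ k₁. -/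
open scoped Quaternion

namespace GLaux

open Polynomial

/-! ### Generic quaternion-algebra identities -/

/-- The reduced norm of a quaternion, as a scalar. -/
def nrd {T : Type*} [CommRing T] {c₁ c₂ : T} (x : ℍ[T,c₁,c₂]) : T :=
  x.re ^ 2 - c₁ * x.imI ^ 2 - c₂ * x.imJ ^ 2 + c₁ * c₂ * x.imK ^ 2

/-- The reduced trace of a quaternion, as a scalar. -/
def trd {T : Type*} [CommRing T] {c₁ c₂ : T} (x : ℍ[T,c₁,c₂]) : T := 2 * x.re

variable {T : Type*} [CommRing T] {c₁ c₂ : T}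

lemma mul_star (x : ℍ[T,c₁,c₂]) : x * star x = algebraMap T _ (nrd x) := by
  ext <;>
    simp [nrd, QuaternionAlgebra.algebraMap_eq, QuaternionAlgebra.re_mul,
      QuaternionAlgebra.imI_mul, QuaternionAlgebra.imJ_mul, QuaternionAlgebra.imK_mul] <;>
    ring

lemma quad (x : ℍ[T,c₁,c₂]) :
    x * x - algebraMap T _ (trd x) * x + algebraMap T _ (nrd x) = 0 := by
  ext <;>
    simp [nrd, trd, QuaternionAlgebra.algebraMap_eq, QuaternionAlgebra.re_mul,
      QuaternionAlgebra.imI_mul, QuaternionAlgebra.imJ_mul, QuaternionAlgebra.imK_mul] <;>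
    ring

/-- Key identity: the reduced norm of a commutator in terms of traces and norms. -/
lemma keyid (x y : ℍ[T,c₁,c₂]) :
    4 * nrd (x * y - y * x) =
      (trd x ^ 2 - 4 * nrd x) * (trd y ^ 2 - 4 * nrd y) -
        (2 * trd (x * y) - trd x * trd y) ^ 2 := by
  simp only [nrd, trd, QuaternionAlgebra.re_mul, QuaternionAlgebra.imI_mul,
    QuaternionAlgebra.imJ_mul, QuaternionAlgebra.imK_mul, QuaternionAlgebra.re_sub,
    QuaternionAlgebra.imI_sub, QuaternionAlgebra.imJ_sub, QuaternionAlgebra.imK_sub]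
  ring

/-- The discriminant of `x + s • y` is a binary quadratic form in `s`. -/
lemma Dsid (x y : ℍ[T,c₁,c₂]) (s : T) :
    trd (x + s • y) ^ 2 - 4 * nrd (x + s • y) =
      (trd x ^ 2 - 4 * nrd x) + (2 * (2 * trd (x * y) - trd x * trd y)) * s +
        (trd y ^ 2 - 4 * nrd y) * s ^ 2 := by
  simp only [nrd, trd, QuaternionAlgebra.re_mul, QuaternionAlgebra.re_add,
    QuaternionAlgebra.imI_add, QuaternionAlgebra.imJ_add, QuaternionAlgebra.imK_add,
    QuaternionAlgebra.re_smul, QuaternionAlgebra.imI_smul, QuaternionAlgebra.imJ_smul,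
    QuaternionAlgebra.imK_smul, smul_eq_mul]
  ring

lemma purepart (x : ℍ[T,c₁,c₂]) :
    trd x ^ 2 - 4 * nrd x = -4 * nrd (x - algebraMap T _ x.re) := by
  simp only [nrd, trd, QuaternionAlgebra.algebraMap_eq, QuaternionAlgebra.re_sub,
    QuaternionAlgebra.imI_sub, QuaternionAlgebra.imJ_sub, QuaternionAlgebra.imK_sub]
  ring

lemma scalar_prod (z : ℍ[T,c₁,c₂]) (α β : T) :
    (z - algebraMap T _ α) * (z - algebraMap T _ β) =
      z * z - algebraMap T _ (α + β) * z + algebraMap T _ (α * β) := by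
  ext <;>
    simp [QuaternionAlgebra.algebraMap_eq, QuaternionAlgebra.re_mul,
      QuaternionAlgebra.imI_mul, QuaternionAlgebra.imJ_mul, QuaternionAlgebra.imK_mul] <;>
    ring

/-! ### Positivity of the norm form -/

section Ordered

variable {K : Type*} [Field K] [LinearOrder K] [IsStrictOrderedRing K] {c₁ c₂ : K}

lemma nrd_nonneg (hc₁ : c₁ < 0) (hc₂ : c₂ < 0) (x : ℍ[K,c₁,c₂]) : 0 ≤ nrd x := by
  have h1 := sq_nonneg x.re
  have h2 := sq_nonneg x.imI
  have h3 := sq_nonneg x.imJ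
  have h4 := sq_nonneg x.imK
  have : 0 < c₁ * c₂ := mul_pos_of_neg_of_neg hc₁ hc₂
  unfold nrd
  nlinarith

lemma nrd_pos (hc₁ : c₁ < 0) (hc₂ : c₂ < 0) {x : ℍ[K,c₁,c₂]} (hx : x ≠ 0) : 0 < nrd x := by
  have hcc : 0 < c₁ * c₂ := mul_pos_of_neg_of_neg hc₁ hc₂
  have h : x.re ≠ 0 ∨ x.imI ≠ 0 ∨ x.imJ ≠ 0 ∨ x.imK ≠ 0 := by
    by_contra h
    push_neg at h
    exact hx (by ext <;> simp [h.1, h.2.1, h.2.2.1, h.2.2.2])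
  unfold nrd
  rcases h with h | h | h | h
  · nlinarith [sq_nonneg x.imI, sq_nonneg x.imJ, sq_nonneg x.imK, sq_pos_of_ne_zero h]
  · nlinarith [sq_nonneg x.re, sq_nonneg x.imJ, sq_nonneg x.imK, sq_pos_of_ne_zero h]
  · nlinarith [sq_nonneg x.re, sq_nonneg x.imI, sq_nonneg x.imK, sq_pos_of_ne_zero h]
  · nlinarith [sq_nonneg x.re, sq_nonneg x.imI, sq_nonneg x.imJ, sq_pos_of_ne_zero h]

end Ordered

/-! ### Ramification at infinity forces `c₁, c₂ < 0` -/

lemma c_neg_of_div {c : ℝ} {c₂ : ℝ}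
    (hdiv : ∀ x : ℍ[ℝ,c,c₂], x ≠ 0 → IsUnit x)
    (x : ℍ[ℝ,c,c₂]) (hx0 : x ≠ 0) (hxn : nrd x = 0) : False := by
  have h := mul_star x
  rw [hxn, map_zero] at h
  have hu := hdiv x hx0
  have hstar : star x = 0 := (IsUnit.mul_right_eq_zero hu).mp h
  exact hx0 (by simpa using congrArg star hstar)

lemma c₁_neg {c₁ c₂ : ℚ}
    (hinf : ∀ x : ℍ[ℝ, (c₁ : ℝ), (c₂ : ℝ)], x ≠ 0 → IsUnit x) : c₁ < 0 := by
  by_contra h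
  push_neg at h
  have hc : (0 : ℝ) ≤ (c₁ : ℝ) := by exact_mod_cast h
  set x : ℍ[ℝ,(c₁:ℝ),(c₂:ℝ)] := ⟨Real.sqrt c₁, 1, 0, 0⟩ with hx
  have hx0 : x ≠ 0 := by
    intro h0
    have := congrArg QuaternionAlgebra.imI h0
    simp [hx] at this
  apply c_neg_of_div hinf x hx0
  simp only [nrd, hx]
  rw [Real.sq_sqrt hc]
  ring

lemma c₂_neg {c₁ c₂ : ℚ}
    (hinf : ∀ x : ℍ[ℝ, (c₁ : ℝ), (c₂ : ℝ)], x ≠ 0 → IsUnit x) : c₂ < 0 := by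
  by_contra h
  push_neg at h
  have hc : (0 : ℝ) ≤ (c₂ : ℝ) := by exact_mod_cast h
  set x : ℍ[ℝ,(c₁:ℝ),(c₂:ℝ)] := ⟨Real.sqrt c₂, 0, 1, 0⟩ with hx
  have hx0 : x ≠ 0 := by
    intro h0
    have := congrArg QuaternionAlgebra.imJ h0
    simp [hx] at this
  apply c_neg_of_div hinf x hx0
  simp only [nrd, hx]
  nlinarith [Real.sq_sqrt hc]

/-! ### Integrality of reduced trace and norm -/

/-- The reduced trace and norm of an integral quaternion over `ℚ` are integers. -/
lemma trd_nrd_int {c₁ c₂ : ℚ} (x : ℍ[ℚ,c₁,c₂]) (hx : IsIntegral ℤ x) :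
    ∃ t n : ℤ, (t : ℚ) = trd x ∧ (n : ℚ) = nrd x := by
  by_cases hs : x.imI = 0 ∧ x.imJ = 0 ∧ x.imK = 0
  · -- scalar case
    have hxe : x = algebraMap ℚ ℍ[ℚ,c₁,c₂] x.re := by
      rw [QuaternionAlgebra.algebraMap_eq]
      ext <;> simp [hs.1, hs.2.1, hs.2.2]
    rw [hxe] at hx
    have hre : IsIntegral ℤ x.re :=
      (isIntegral_algebraMap_iff (QuaternionAlgebra.algebraMap_injective)).mp hx
    obtain ⟨m, hm⟩ := IsIntegrallyClosed.isIntegral_iff.mp hre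
    have hm' : (m : ℚ) = x.re := by exact_mod_cast hm
    refine ⟨2 * m, m ^ 2, ?_, ?_⟩
    · rw [trd, ← hm']; norm_num
    · rw [nrd, hs.1, hs.2.1, hs.2.2]
      push_cast
      rw [hm']
      ring
  · -- non-scalar case
    obtain ⟨P, hPmonic, hPx⟩ := hx
    set q : ℚ[X] := X ^ 2 - (C (trd x) * X - C (nrd x)) with hq
    have hlin : (C (trd x) * X - C (nrd x)).degree ≤ 1 := by
      have he : C (trd x) * X - C (nrd x) = C (trd x) * X + C (-(nrd x)) := by
        rw [map_neg]; ring
      rw [he]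
      exact degree_linear_le
    have hqmonic : q.Monic := by
      apply monic_X_pow_sub (n := 2)
      exact lt_of_le_of_lt hlin (by norm_num)
    have hqdeg : q.degree = 2 := by
      rw [hq, sub_eq_add_neg]
      rw [degree_add_eq_left_of_degree_lt]
      · exact degree_X_pow 2
      · rw [degree_X_pow, degree_neg]
        exact lt_of_le_of_lt hlin (by norm_num)
    have hqx : (aeval x) q = 0 := by
      have h := quad (c₁ := c₁) (c₂ := c₂) x
      simp only [hq, map_sub, map_mul, map_pow, aeval_X, aeval_C, sq]
      rw [← h]
      simp [QuaternionAlgebra.coe_algebraMap]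
      abel
    set Pm : ℚ[X] := P.map (algebraMap ℤ ℚ) with hPm
    have hdec : Pm %ₘ q + q * (Pm /ₘ q) = Pm := modByMonic_add_div Pm q
    have haevalPm : (aeval x) Pm = 0 := by
      rw [hPm, aeval_map_algebraMap]
      exact hPx
    have hr0 : (aeval x) (Pm %ₘ q) = 0 := by
      have := congrArg (aeval x) hdec
      rw [map_add, map_mul, hqx, zero_mul, add_zero, haevalPm] at this
      exact this
    have hrdeg : (Pm %ₘ q).degree ≤ 1 := by
      have h2 := degree_modByMonic_lt Pm hqmonic
      rw [hqdeg] at h2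
      exact Order.lt_succ_iff.mp (by exact_mod_cast h2)
    set r := Pm %ₘ q with hr
    have hreq : r = C (r.coeff 1) * X + C (r.coeff 0) := eq_X_add_C_of_degree_le_one hrdeg
    have haevalr : algebraMap ℚ _ (r.coeff 1) * x + algebraMap ℚ _ (r.coeff 0) = 0 := by
      have := hr0
      rw [hreq] at this
      simpa [map_add, map_mul, aeval_X, aeval_C] using this
    have hcoeff1 : r.coeff 1 = 0 := by
      by_contra hc
      apply hs
      have h1 := congrArg QuaternionAlgebra.imI haevalr
      have h2 := congrArg QuaternionAlgebra.imJ haevalr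
      have h3 := congrArg QuaternionAlgebra.imK haevalr
      simp [QuaternionAlgebra.algebraMap_eq, QuaternionAlgebra.imI_mul,
        QuaternionAlgebra.imJ_mul, QuaternionAlgebra.imK_mul] at h1 h2 h3
      exact ⟨h1.resolve_left hc, h2.resolve_left hc, h3.resolve_left hc⟩
    have hcoeff0 : r.coeff 0 = 0 := by
      have := haevalr
      rw [hcoeff1] at this
      simp at this
      exact (map_eq_zero_iff _ QuaternionAlgebra.algebraMap_injective).mp this
    have hrzero : r = 0 := by rw [hreq, hcoeff1, hcoeff0]; simp
    have hdvd : q ∣ Pm := (modByMonic_eq_zero_iff_dvd hqmonic).mp hrzero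
    obtain ⟨g', hg'⟩ := IsIntegrallyClosed.eq_map_mul_C_of_dvd (K := ℚ) hPmonic hdvd
    rw [hqmonic.leadingCoeff, map_one, mul_one] at hg'
    refine ⟨-(g'.coeff 1), g'.coeff 0, ?_, ?_⟩
    · have := congrArg (fun f => f.coeff 1) hg'
      simp only [coeff_map] at this
      rw [hq] at this
      simp [coeff_X_pow, coeff_C] at this
      push_cast
      rw [this]
      ring
    · have := congrArg (fun f => f.coeff 0) hg'
      simp only [coeff_map] at this
      rw [hq] at this
      simp [coeff_X_pow, coeff_C] at this
      push_cast
      rw [this]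

/-! ### Hensel's lemma for squares in `ℚ_[p]` -/

/-- An integer that is a nonzero square mod an odd prime is a square in `ℚ_[p]`. -/
lemma isSquare_padic {p : ℕ} [Fact p.Prime] (hp2 : p ≠ 2) (u : ℤ) (w : ZMod p) (hw : w ≠ 0)
    (hsq : (u : ZMod p) = w ^ 2) : ∃ σ : ℚ_[p], σ ^ 2 = (u : ℚ_[p]) := by
  have hpprime := (Fact.out : p.Prime)
  set a : ℤ_[p] := ((w.val : ℤ) : ℤ_[p]) with ha
  set F : Polynomial ℤ_[p] := X ^ 2 - C (u : ℤ_[p]) with hF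
  have hFa : F.eval a = ((((w.val : ℤ)) ^ 2 - u : ℤ) : ℤ_[p]) := by
    simp [hF, ha]
  have hder : F.derivative.eval a = ((2 * (w.val : ℤ) : ℤ) : ℤ_[p]) := by
    simp [hF, ha]
    norm_num
  have hdvd : (p : ℤ) ∣ ((w.val : ℤ) ^ 2 - u) := by
    have : (((w.val : ℤ) ^ 2 - u : ℤ) : ZMod p) = 0 := by
      push_cast
      rw [ZMod.natCast_val, ZMod.cast_id]
      rw [← hsq]
      ring
    exact_mod_cast (ZMod.intCast_zmod_eq_zero_iff_dvd _ p).mp this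
  have hnorm1 : ‖F.eval a‖ < 1 := by
    rw [hFa]
    rw [PadicInt.norm_int_lt_one_iff_dvd]
    exact hdvd
  have hndvd : ¬ (p : ℤ) ∣ (2 * (w.val : ℤ)) := by
    intro h
    rcases (Int.Prime.dvd_mul' (by exact_mod_cast hpprime) h) with h | h
    · have h2 : p ∣ 2 := by exact_mod_cast h
      exact hp2 ((Nat.prime_dvd_prime_iff_eq hpprime Nat.prime_two).mp h2)
    · have : ((w.val : ℤ) : ZMod p) = 0 := by
        exact_mod_cast (ZMod.intCast_zmod_eq_zero_iff_dvd _ p).mpr h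
      rw [Int.cast_natCast, ZMod.natCast_val, ZMod.cast_id] at this
      exact hw this
  have hnorm2 : ‖F.derivative.eval a‖ = 1 := by
    rw [hder]
    by_contra h
    have hle := PadicInt.norm_le_one ((2 * (w.val : ℤ) : ℤ) : ℤ_[p])
    have : ‖((2 * (w.val : ℤ) : ℤ) : ℤ_[p])‖ < 1 := lt_of_le_of_ne hle h
    exact hndvd ((PadicInt.norm_int_lt_one_iff_dvd _).mp this)
  have hcond : ‖F.eval a‖ < ‖F.derivative.eval a‖ ^ 2 := by
    rw [hnorm2]; simpa using hnorm1
  obtain ⟨z, hz, -⟩ := hensels_lemma hcond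
  refine ⟨((z : ℤ_[p]) : ℚ_[p]), ?_⟩
  have hz2 : z ^ 2 = ((u : ℤ_[p])) := by
    have := hz
    simp [hF] at this
    linear_combination this
  calc ((z : ℤ_[p]) : ℚ_[p]) ^ 2 = ((z ^ 2 : ℤ_[p]) : ℚ_[p]) := by push_cast; ring
    _ = (u : ℚ_[p]) := by rw [hz2]; push_cast; ring

/-! ### Elements with square discriminant in a quaternion division algebra are scalars -/

lemma scalar_of_disc_sq {K : Type*} [Field K] [CharZero K] {c₁ c₂ : K}
    (hdiv : ∀ x : ℍ[K,c₁,c₂], x ≠ 0 → IsUnit x) (z : ℍ[K,c₁,c₂]) (σ : K)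
    (hσ : σ ^ 2 = trd z ^ 2 - 4 * nrd z) :
    z.imI = 0 ∧ z.imJ = 0 ∧ z.imK = 0 := by
  set α : K := (trd z + σ) / 2 with hα
  set β : K := (trd z - σ) / 2 with hβ
  have hsum : α + β = trd z := by rw [hα, hβ]; ring
  have hprod : α * β = nrd z := by
    rw [hα, hβ]
    field_simp
    linear_combination -hσ
  have h0 : (z - algebraMap K _ α) * (z - algebraMap K _ β) = 0 := by
    rw [scalar_prod, hsum, hprod, quad]
  have : z = algebraMap K _ α ∨ z = algebraMap K _ β := by
    by_cases h : z - algebraMap K _ α = 0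
    · exact Or.inl (sub_eq_zero.mp h)
    · right
      have hu := hdiv _ h
      have := (IsUnit.mul_right_eq_zero hu).mp h0
      exact sub_eq_zero.mp this
  rcases this with h | h <;>
    · rw [h, QuaternionAlgebra.algebraMap_eq]
      exact ⟨rfl, rfl, rfl⟩

/-- A rational quaternion with integer discriminant that is a nonzero square mod `p`
(where the algebra is ramified at `p`) must be a scalar. -/
lemma scalar_of_int_disc {p : ℕ} [Fact p.Prime] (hp2 : p ≠ 2) {c₁ c₂ : ℚ}
    (hramp : ∀ x : ℍ[ℚ_[p], (c₁ : ℚ_[p]), (c₂ : ℚ_[p])], x ≠ 0 → IsUnit x)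
    (z : ℍ[ℚ,c₁,c₂]) (Dz : ℤ) (hD : (Dz : ℚ) = trd z ^ 2 - 4 * nrd z)
    (w : ZMod p) (hw : w ≠ 0) (hsq : ((Dz : ℤ) : ZMod p) = w ^ 2) :
    z.imI = 0 ∧ z.imJ = 0 ∧ z.imK = 0 := by
  obtain ⟨σ, hσ⟩ := isSquare_padic hp2 Dz w hw hsq
  set z' : ℍ[ℚ_[p],(c₁:ℚ_[p]),(c₂:ℚ_[p])] :=
    ⟨(z.re : ℚ_[p]), (z.imI : ℚ_[p]), (z.imJ : ℚ_[p]), (z.imK : ℚ_[p])⟩ with hz'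
  have hσ' : σ ^ 2 = trd z' ^ 2 - 4 * nrd z' := by
    rw [hσ]
    have hcast : ((Dz : ℚ) : ℚ_[p]) = trd z' ^ 2 - 4 * nrd z' := by
      rw [hD]
      simp only [trd, nrd, hz']
      push_cast
      ring
    rw [← hcast]
    push_cast
    ring
  have h := scalar_of_disc_sq hramp z' σ hσ'
  refine ⟨?_, ?_, ?_⟩
  · have : (z.imI : ℚ_[p]) = 0 := h.1
    exact_mod_cast this
  · have : (z.imJ : ℚ_[p]) = 0 := h.2.1
    exact_mod_cast this
  · have : (z.imK : ℚ_[p]) = 0 := h.2.2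
    exact_mod_cast this

/-! ### Nondegenerate binary quadratic forms over `ZMod p` represent `1` -/

lemma represents_one {p : ℕ} [Fact p.Prime] (hp2 : p ≠ 2) (A B D : ZMod p)
    (h : B ^ 2 - 4 * A * D ≠ 0) :
    ∃ u v : ZMod p, A * u ^ 2 + B * u * v + D * v ^ 2 = 1 := by
  have hpprime := (Fact.out : p.Prime)
  have h2 : (2 : ZMod p) ≠ 0 := by
    intro h2
    have hdvd : (p : ℕ) ∣ 2 := by
      exact_mod_cast (ZMod.natCast_eq_zero_iff 2 p).mp (by exact_mod_cast h2)
    exact hp2 ((Nat.prime_dvd_prime_iff_eq hpprime Nat.prime_two).mp hdvd)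
  have h4 : (4 : ZMod p) ≠ 0 := by
    have h44 : (4 : ZMod p) = 2 * 2 := by norm_num
    rw [h44]
    exact mul_ne_zero h2 h2
  by_cases hA : A = 0
  · have hB : B ≠ 0 := by
      intro hB
      apply h
      rw [hA, hB]
      ring
    refine ⟨B⁻¹ * (1 - D), 1, ?_⟩
    rw [hA]
    field_simp
    ring
  · have h4A : (4 : ZMod p) * A ≠ 0 := mul_ne_zero h4 hA
    set D' : ZMod p := D - B ^ 2 / (4 * A) with hD'
    have hD'0 : D' ≠ 0 := by
      intro h0
      apply h
      have hD : D = B ^ 2 / (4 * A) := by linear_combination h0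
      rw [hD]
      field_simp
      ring
    have hcard : Fintype.card (ZMod p) % 2 = 1 := by
      rw [ZMod.card]
      exact Nat.odd_iff.mp (hpprime.odd_of_ne_two hp2)
    have hfdeg : (C A * X ^ 2 : (ZMod p)[X]).degree = 2 := degree_C_mul_X_pow 2 hA
    have hgdeg : (C D' * X ^ 2 - C 1 : (ZMod p)[X]).degree = 2 := by
      rw [degree_sub_eq_left_of_degree_lt]
      · exact degree_C_mul_X_pow 2 hD'0
      · rw [degree_C_mul_X_pow 2 hD'0]
        exact lt_of_le_of_lt degree_C_le (by norm_num)
    obtain ⟨x, t, hxt⟩ := FiniteField.exists_root_sum_quadratic hfdeg hgdeg hcard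
    simp only [eval_mul, eval_pow, eval_X, eval_C, eval_sub, eval_one] at hxt
    have hsol : A * x ^ 2 + D' * t ^ 2 = 1 := by linear_combination hxt
    refine ⟨x - B * t / (2 * A), t, ?_⟩
    have h2A : (2 : ZMod p) * A ≠ 0 := mul_ne_zero h2 hA
    have key : A * (x - B * t / (2 * A)) ^ 2 + B * (x - B * t / (2 * A)) * t + D * t ^ 2
        = A * x ^ 2 + D' * t ^ 2 := by
      rw [hD']
      field_simp
      ring
    rw [key, hsol]

end GLaux

/-- An order in a quaternion algebra `B` over `ℚ`: a subring all of whose elements are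
integral over `ℤ` and which spans `B` over `ℚ`. -/
def IsQuaternionOrder {c₁ c₂ : ℚ} (R : Subring ℍ[ℚ,c₁,c₂]) : Prop :=
  (∀ x ∈ R, IsIntegral ℤ x) ∧ Submodule.span ℚ (R : Set ℍ[ℚ,c₁,c₂]) = ⊤

/-- (Goren–Lauter: elements of small norm commute.) Let `B = (c₁, c₂ / ℚ)` be a quaternion
algebra over `ℚ` which is ramified exactly at a prime `p` and at `∞` (i.e. `B ⊗ ℚ_p` and
`B ⊗ ℝ` are division algebras, while `B ⊗ ℚ_ℓ` is not a division algebra for every prime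
`ℓ ≠ p`), and let `R` be a maximal order of `B`. If `k₁, k₂ ∈ R` have reduced norms
`Nrd(kᵢ) = kᵢ · k̄ᵢ < √p / 2`, then `k₁ k₂ = k₂ k₁`. -/
theorem small_norm_elements_commute (p : ℕ) [hp : Fact p.Prime] (c₁ c₂ : ℚ)
    (hinf : ∀ x : ℍ[ℝ, (c₁ : ℝ), (c₂ : ℝ)], x ≠ 0 → IsUnit x)
    (hramp : ∀ x : ℍ[ℚ_[p], (c₁ : ℚ_[p]), (c₂ : ℚ_[p])], x ≠ 0 → IsUnit x)
    (hur : ∀ (ℓ : ℕ) [Fact ℓ.Prime], ℓ ≠ p →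
      ∃ x : ℍ[ℚ_[ℓ], (c₁ : ℚ_[ℓ]), (c₂ : ℚ_[ℓ])], x ≠ 0 ∧ ¬IsUnit x)
    (R : Subring ℍ[ℚ,c₁,c₂]) (hR : IsQuaternionOrder R)
    (hmax : ∀ S : Subring ℍ[ℚ,c₁,c₂], IsQuaternionOrder S → R ≤ S → S = R)
    (k₁ k₂ : ℍ[ℚ,c₁,c₂]) (hk₁ : k₁ ∈ R) (hk₂ : k₂ ∈ R)
    (n₁ n₂ : ℚ) (hn₁ : k₁ * star k₁ = algebraMap ℚ _ n₁)
    (hn₂ : k₂ * star k₂ = algebraMap ℚ _ n₂)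
    (hb₁ : (n₁ : ℝ) < Real.sqrt p / 2) (hb₂ : (n₂ : ℝ) < Real.sqrt p / 2) :
    k₁ * k₂ = k₂ * k₁ := by
  classical
  obtain ⟨hRint, -⟩ := hR
  have hc₁ : c₁ < 0 := GLaux.c₁_neg hinf
  have hc₂ : c₂ < 0 := GLaux.c₂_neg hinf
  have hc₁' : (c₁ : ℚ) < 0 := hc₁
  -- identify n₁, n₂ with the reduced norms
  have hn₁' : GLaux.nrd k₁ = n₁ :=
    QuaternionAlgebra.algebraMap_injective (by rw [← GLaux.mul_star, hn₁])
  have hn₂' : GLaux.nrd k₂ = n₂ :=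
    QuaternionAlgebra.algebraMap_injective (by rw [← GLaux.mul_star, hn₂])
  by_cases hk10 : k₁ = 0
  · simp [hk10]
  by_cases hk20 : k₂ = 0
  · simp [hk20]
  by_contra hne
  have hδne : k₁ * k₂ - k₂ * k₁ ≠ 0 := sub_ne_zero.mpr hne
  set δ : ℍ[ℚ,c₁,c₂] := k₁ * k₂ - k₂ * k₁ with hδ
  have hδR : δ ∈ R := sub_mem (mul_mem hk₁ hk₂) (mul_mem hk₂ hk₁)
  -- integer traces and norms
  obtain ⟨a, b, ha, hb⟩ := GLaux.trd_nrd_int k₁ (hRint k₁ hk₁)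
  obtain ⟨c, d, hc, hd⟩ := GLaux.trd_nrd_int k₂ (hRint k₂ hk₂)
  obtain ⟨e, g, he, -⟩ := GLaux.trd_nrd_int (k₁ * k₂) (hRint _ (mul_mem hk₁ hk₂))
  obtain ⟨t', m, -, hm⟩ := GLaux.trd_nrd_int δ (hRint δ hδR)
  -- positivity
  have hbq : (b : ℚ) = n₁ := by rw [hb, hn₁']
  have hdq : (d : ℚ) = n₂ := by rw [hd, hn₂']
  have hbpos : 0 < b := by
    have : (0 : ℚ) < (b : ℚ) := by rw [hb]; exact GLaux.nrd_pos hc₁ hc₂ hk10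
    exact_mod_cast this
  have hdpos : 0 < d := by
    have : (0 : ℚ) < (d : ℚ) := by rw [hd]; exact GLaux.nrd_pos hc₁ hc₂ hk20
    exact_mod_cast this
  -- real bounds
  have hpR : (0 : ℝ) ≤ (p : ℝ) := by positivity
  have hbR : (b : ℝ) < Real.sqrt p / 2 := by
    have : ((b : ℚ) : ℝ) = (n₁ : ℝ) := by exact_mod_cast congrArg (fun q : ℚ => (q : ℝ)) hbq
    rw [show ((b : ℤ) : ℝ) = ((b : ℚ) : ℝ) by push_cast; ring, this]
    exact hb₁
  have hdR : (d : ℝ) < Real.sqrt p / 2 := by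
    have : ((d : ℚ) : ℝ) = (n₂ : ℝ) := by exact_mod_cast congrArg (fun q : ℚ => (q : ℝ)) hdq
    rw [show ((d : ℤ) : ℝ) = ((d : ℚ) : ℝ) by push_cast; ring, this]
    exact hb₂
  -- p > 4, hence p ≠ 2
  have hsqrt2 : (2 : ℝ) < Real.sqrt p := by
    have h1b : (1 : ℝ) ≤ (b : ℝ) := by exact_mod_cast hbpos
    nlinarith
  have hp4 : (4 : ℝ) < (p : ℝ) := by
    nlinarith [Real.sq_sqrt hpR]
  have hp4' : 4 < p := by exact_mod_cast hp4
  have hp2 : p ≠ 2 := by omega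
  -- the key integers
  set D₁ : ℤ := a ^ 2 - 4 * b with hD₁def
  set D₂ : ℤ := c ^ 2 - 4 * d with hD₂def
  set E : ℤ := 2 * e - a * c with hEdef
  have hkey : 4 * m = D₁ * D₂ - E ^ 2 := by
    have hk := GLaux.keyid k₁ k₂
    rw [← hδ, ← hm, ← ha, ← hb, ← hc, ← hd, ← he] at hk
    exact_mod_cast hk
  have hD₁le : D₁ ≤ 0 := by
    have h1 : (D₁ : ℚ) ≤ 0 := by
      have hpp := GLaux.purepart k₁
      rw [← ha, ← hb] at hpp
      have hge := GLaux.nrd_nonneg hc₁ hc₂ (k₁ - algebraMap ℚ _ k₁.re)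
      rw [hD₁def]
      push_cast
      linarith
    exact_mod_cast h1
  have hD₂le : D₂ ≤ 0 := by
    have h1 : (D₂ : ℚ) ≤ 0 := by
      have hpp := GLaux.purepart k₂
      rw [← hc, ← hd] at hpp
      have hge := GLaux.nrd_nonneg hc₁ hc₂ (k₂ - algebraMap ℚ _ k₂.re)
      rw [hD₂def]
      push_cast
      linarith
    exact_mod_cast h1
  have hmpos : 0 < m := by
    have : (0 : ℚ) < (m : ℚ) := by rw [hm]; exact GLaux.nrd_pos hc₁ hc₂ hδne
    exact_mod_cast this
  -- m < p
  have hmlt : m < p := by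
    have hle : 4 * m ≤ 16 * (b * d) := by
      have hmul : (4 * b - a ^ 2) * (4 * d - c ^ 2) ≤ (4 * b) * (4 * d) := by
        apply mul_le_mul
        · nlinarith [sq_nonneg a]
        · nlinarith [sq_nonneg c]
        · linarith
        · linarith
      nlinarith [sq_nonneg E]
    have hmR : (m : ℝ) < (p : ℝ) := by
      have hbd : (b : ℝ) * (d : ℝ) < (p : ℝ) / 4 := by
        have h0b : (0 : ℝ) ≤ (b : ℝ) := by exact_mod_cast le_of_lt hbpos
        have h0d : (0 : ℝ) ≤ (d : ℝ) := by exact_mod_cast le_of_lt hdpos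
        have := mul_lt_mul'' hbR hdR h0b h0d
        calc (b : ℝ) * (d : ℝ) < (Real.sqrt p / 2) * (Real.sqrt p / 2) := this
          _ = (p : ℝ) / 4 := by
              rw [div_mul_div_comm, Real.mul_self_sqrt hpR]
              norm_num
      have hleR : 4 * (m : ℝ) ≤ 16 * ((b : ℝ) * (d : ℝ)) := by exact_mod_cast hle
      linarith
    exact_mod_cast hmR
  have hpm : ¬ ((p : ℤ) ∣ m) := by
    intro hdv
    have := Int.le_of_dvd hmpos hdv
    linarith
  have hmzmod : ((m : ℤ) : ZMod p) ≠ 0 := fun h => hpm ((ZMod.intCast_zmod_eq_zero_iff_dvd m p).mp h)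
  -- the quadratic form discriminant is nonzero mod p
  have hIntId : (2 * E) ^ 2 - 4 * D₂ * D₁ = -16 * m := by linear_combination (4 : ℤ) * hkey
  have hp16 : ¬ ((p : ℤ) ∣ (-16 : ℤ)) := by
    intro hdv
    have h16 : (p : ℤ) ∣ 16 := (dvd_neg).mp hdv
    have h16n : p ∣ 16 := by exact_mod_cast h16
    have h2p : p ∣ 2 := hp.out.dvd_of_dvd_pow (show p ∣ 2 ^ 4 by norm_num; exact h16n)
    exact hp2 ((Nat.prime_dvd_prime_iff_eq hp.out Nat.prime_two).mp h2p)
  have hdisc : (((2 * E : ℤ) : ZMod p)) ^ 2 - 4 * ((D₂ : ℤ) : ZMod p) * ((D₁ : ℤ) : ZMod p) ≠ 0 := by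
    intro h0
    have : (((-16 * m : ℤ)) : ZMod p) = 0 := by
      rw [← hIntId]
      push_cast
      push_cast at h0
      linear_combination h0
    have hdvd : (p : ℤ) ∣ (-16 * m) := (ZMod.intCast_zmod_eq_zero_iff_dvd _ p).mp this
    rcases Int.Prime.dvd_mul' (by exact_mod_cast hp.out) hdvd with h | h
    · exact hp16 h
    · exact hpm h
  obtain ⟨u, v, huv⟩ :=
    GLaux.represents_one hp2 ((D₂ : ℤ) : ZMod p) ((2 * E : ℤ) : ZMod p) ((D₁ : ℤ) : ZMod p) hdisc
  by_cases hv : v = 0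
  · -- then D₂ is a nonzero square mod p, so k₂ is a scalar: contradiction
    rw [hv] at huv
    simp at huv
    have hu0 : u ≠ 0 := by
      intro h0
      rw [h0] at huv
      simp at huv
    have hsqD₂ : ((D₂ : ℤ) : ZMod p) = (u⁻¹) ^ 2 := by
      rw [inv_pow]
      have huv' : u ^ 2 * ((D₂ : ℤ) : ZMod p) = 1 := by rw [mul_comm]; exact huv
      exact eq_inv_of_mul_eq_one_right huv'
    have hD₂q : ((D₂ : ℤ) : ℚ) = GLaux.trd k₂ ^ 2 - 4 * GLaux.nrd k₂ := by
      rw [hD₂def, ← hc, ← hd]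
      push_cast
      ring
    have hsc := GLaux.scalar_of_int_disc hp2 hramp k₂ D₂ hD₂q u⁻¹ (inv_ne_zero hu0) hsqD₂
    apply hne
    have hk₂e : k₂ = algebraMap ℚ _ k₂.re := by
      rw [QuaternionAlgebra.algebraMap_eq]
      ext
      · rfl
      · exact hsc.1
      · exact hsc.2.1
      · exact hsc.2.2
    rw [hk₂e]
    rw [← Algebra.commutes]
  · -- then D(s) is a nonzero square mod p for a suitable integer s
    set s : ℤ := ((u * v⁻¹).val : ℤ) with hs
    have hscast : ((s : ℤ) : ZMod p) = u * v⁻¹ := by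
      rw [hs]
      push_cast
      rw [ZMod.natCast_val, ZMod.cast_id]
    set Ds : ℤ := D₁ + 2 * E * s + D₂ * s ^ 2 with hDsdef
    have hsqDs : ((Ds : ℤ) : ZMod p) = (v⁻¹) ^ 2 := by
      have hcast : ((Ds : ℤ) : ZMod p) =
          ((D₁ : ℤ) : ZMod p) + 2 * ((E : ℤ) : ZMod p) * (u * v⁻¹) +
            ((D₂ : ℤ) : ZMod p) * (u * v⁻¹) ^ 2 := by
        rw [hDsdef]
        push_cast [hscast]
        ring
      have h1 : ((Ds : ℤ) : ZMod p) * v ^ 2 = 1 := by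
        rw [hcast]
        have expand : (((D₁ : ℤ) : ZMod p) + 2 * ((E : ℤ) : ZMod p) * (u * v⁻¹) +
            ((D₂ : ℤ) : ZMod p) * (u * v⁻¹) ^ 2) * v ^ 2 =
            ((D₂ : ℤ) : ZMod p) * u ^ 2 + ((2 * E : ℤ) : ZMod p) * u * v +
              ((D₁ : ℤ) : ZMod p) * v ^ 2 := by
          push_cast
          field_simp
          ring
        rw [expand, huv]
      rw [inv_pow]
      have h1' : v ^ 2 * ((Ds : ℤ) : ZMod p) = 1 := by rw [mul_comm]; exact h1
      exact eq_inv_of_mul_eq_one_right h1'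
    set z : ℍ[ℚ,c₁,c₂] := k₁ + (s : ℚ) • k₂ with hz
    have hDzq : ((Ds : ℤ) : ℚ) = GLaux.trd z ^ 2 - 4 * GLaux.nrd z := by
      have hid := GLaux.Dsid k₁ k₂ (s : ℚ)
      rw [← ha, ← hb, ← hc, ← hd, ← he] at hid
      rw [← hz] at hid
      rw [hid, hDsdef, hD₁def, hD₂def, hEdef]
      push_cast
      ring
    have hsc := GLaux.scalar_of_int_disc hp2 hramp z Ds hDzq v⁻¹ (inv_ne_zero hv) hsqDs
    apply hne
    have hze : z = algebraMap ℚ _ z.re := by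
      rw [QuaternionAlgebra.algebraMap_eq]
      ext
      · rfl
      · exact hsc.1
      · exact hsc.2.1
      · exact hsc.2.2
    have hk₁e : k₁ = algebraMap ℚ _ z.re - (s : ℚ) • k₂ := by
      rw [← hze, hz]
      exact (add_sub_cancel_right k₁ ((s : ℚ) • k₂)).symm
    rw [hk₁e, sub_mul, mul_sub, Algebra.commutes, smul_mul_assoc, mul_smul_comm]
end

section
/- Let K⁺ be a cubic field with conjugate embeddings sending α to α₁, α₂, α₃ (the Galois conjugates of a primitive element α ∉ Q). If m₁, m₂, m₃ are positive integers with m₁α₁ + m₂α₂ + m₃α₃ ∈ Q, then m₁ = m₂ = m₃. -/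
open Polynomial

/-- Let `K⁺ = ℚ(α)` be a cubic field with primitive element `α ∉ ℚ`, and let
`r 0, r 1, r 2 ∈ ℂ` be the three Galois conjugates of `α` (the roots of its degree-3 minimal
polynomial over `ℚ`). If `m 0, m 1, m 2` are positive integers with
`m 0 • r 0 + m 1 • r 1 + m 2 • r 2 ∈ ℚ`, then `m 0 = m 1 = m 2`. -/
theorem conj_comb_rational_of_cubic (α : ℂ) (hint : IsIntegral ℚ α)
    (hdeg : (minpoly ℚ α).natDegree = 3) (r : Fin 3 → ℂ)
    (hroots : (minpoly ℚ α).aroots ℂ = {r 0, r 1, r 2}) (m : Fin 3 → ℕ)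
    (hm : ∀ i, 0 < m i)
    (hsum : ∃ q : ℚ, (m 0 : ℂ) * r 0 + (m 1 : ℂ) * r 1 + (m 2 : ℂ) * r 2 = (q : ℂ)) :
    m 0 = m 1 ∧ m 1 = m 2 := by
  set p := minpoly ℚ α with hp
  have hp0 : p ≠ 0 := minpoly.ne_zero hint
  have hirr : Irreducible p := minpoly.irreducible hint
  have hmon : p.Monic := minpoly.monic hint
  set x := r 0; set y := r 1; set z := r 2
  have hmemroot : ∀ w : ℂ, w ∈ ({x, y, z} : Multiset ℂ) → (aeval w) p = 0 := by
    intro w hw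
    have : w ∈ p.aroots ℂ := by rw [hroots]; exact hw
    exact ((mem_aroots).1 this).2
  have hx : (aeval x) p = 0 := hmemroot x (by simp)
  have hy : (aeval y) p = 0 := hmemroot y (by simp)
  have hz : (aeval z) p = 0 := hmemroot z (by simp)
  have hirrat : ∀ w : ℂ, (aeval w) p = 0 → ∀ q : ℚ, w ≠ (q : ℂ) := by
    intro w hw q hwq
    have h1 : (aeval ((q : ℂ))) p = 0 := hwq ▸ hw
    rw [← eq_ratCast (algebraMap ℚ ℂ) q] at h1
    rw [aeval_algebraMap_eq_zero_iff] at h1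
    have h3 : p.degree = 1 :=
      Polynomial.degree_eq_one_of_irreducible_of_root hirr (by simpa using h1)
    have : p.natDegree = 1 := natDegree_eq_of_degree_eq_some h3
    omega
  have hnodup : ({x, y, z} : Multiset ℂ).Nodup := by
    rw [← hroots]
    exact nodup_roots (hirr.separable.map)
  simp only [Multiset.insert_eq_cons, Multiset.nodup_cons, Multiset.mem_cons,
    Multiset.mem_singleton, Multiset.nodup_singleton] at hnodup
  have hxy : x ≠ y := fun h => hnodup.1 (Or.inl h)
  have hxz : x ≠ z := fun h => hnodup.1 (Or.inr h)
  have hyz : y ≠ z := fun h => hnodup.2.1 h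
  have hmem : ∀ w : ℂ, (aeval w) p = 0 → w = x ∨ w = y ∨ w = z := by
    intro w hw
    have : w ∈ p.aroots ℂ := (mem_aroots).2 ⟨hp0, hw⟩
    rw [hroots] at this
    simpa using this
  -- sum of roots is rational
  obtain ⟨t, ht⟩ : ∃ t : ℚ, x + y + z = (t : ℂ) := by
    have hsplit : (p.map (algebraMap ℚ ℂ)).Splits :=
      IsAlgClosed.splits _
    have h1 := hsplit.nextCoeff_eq_neg_sum_roots_of_monic (hmon.map (algebraMap ℚ ℂ))
    rw [← aroots_def, hroots, nextCoeff_map (algebraMap ℚ ℂ).injective] at h1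
    refine ⟨-p.nextCoeff, ?_⟩
    rw [eq_ratCast (algebraMap ℚ ℂ)] at h1
    simp only [Multiset.insert_eq_cons, Multiset.sum_cons, Multiset.sum_singleton] at h1
    push_cast
    linear_combination h1
  -- key step: affine images of roots are roots
  have hstep : ∀ (a b c : ℚ) (u : ℂ), (aeval u) p = 0 → b ≠ 0 →
      ∀ w v : ℂ, (aeval w) p = 0 → (aeval v) p = 0 → (a : ℂ) * w + (b : ℂ) * v = (c : ℂ) →
      (aeval ((c : ℂ) / b - (a : ℂ) / b * u)) p = 0 := by
    intro a b c u hu hb w v hw hv hrel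
    have hbC : (b : ℂ) ≠ 0 := by exact_mod_cast hb
    set Q : ℚ[X] := p.comp (Polynomial.C (c / b) - Polynomial.C (a / b) * Polynomial.X) with hQ
    have hQw : (aeval w) Q = 0 := by
      rw [hQ, aeval_comp]
      have hv2 : v = ((c : ℂ) - (a : ℂ) * w) / (b : ℂ) :=
        (eq_div_iff hbC).2 (by linear_combination hrel)
      have : (aeval w) (Polynomial.C (c / b) - Polynomial.C (a / b) * Polynomial.X) = v := by
        simp only [map_sub, map_mul, aeval_C, aeval_X, eq_ratCast]
        rw [hv2]
        push_cast
        ring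
      rw [this]; exact hv
    have hminw : p = minpoly ℚ w :=
      minpoly.eq_of_irreducible_of_monic hirr hw hmon
    have hdvd : p ∣ Q := hminw ▸ minpoly.dvd ℚ w hQw
    obtain ⟨s, hs⟩ := hdvd
    have hQu : (aeval u) Q = 0 := by
      rw [hs, map_mul, hu, zero_mul]
    rw [hQ, aeval_comp] at hQu
    have heval : (aeval u) (Polynomial.C (c / b) - Polynomial.C (a / b) * Polynomial.X)
        = (c : ℂ) / b - (a : ℂ) / b * u := by
      simp only [map_sub, map_mul, aeval_C, aeval_X, eq_ratCast]
      push_cast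
      ring
    rwa [heval] at hQu
  obtain ⟨q, hq⟩ := hsum
  set a : ℚ := (m 0 : ℚ) - (m 2 : ℚ) with ha_def
  set b : ℚ := (m 1 : ℚ) - (m 2 : ℚ) with hb_def
  set c : ℚ := q - (m 2 : ℚ) * t with hc_def
  have hab : (a : ℂ) * x + (b : ℂ) * y = (c : ℂ) := by
    push_cast [ha_def, hb_def, hc_def]
    linear_combination hq - (m 2 : ℂ) * ht
  suffices h : a = 0 ∧ b = 0 by
    have h0 : (m 0 : ℚ) = (m 2 : ℚ) := by
      have := h.1; rw [ha_def, sub_eq_zero] at this; exact this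
    have h1 : (m 1 : ℚ) = (m 2 : ℚ) := by
      have := h.2; rw [hb_def, sub_eq_zero] at this; exact this
    have e0 : m 0 = m 2 := by exact_mod_cast h0
    have e1 : m 1 = m 2 := by exact_mod_cast h1
    omega
  by_cases hb : b = 0
  · refine ⟨?_, hb⟩
    by_contra ha
    have haC : (a : ℂ) ≠ 0 := by exact_mod_cast ha
    have hb0 : (b : ℂ) = 0 := by exact_mod_cast hb
    refine hirrat x hx (c / a) ?_
    push_cast
    exact (eq_div_iff haC).2 (by linear_combination hab - y * hb0)
  · exfalso
    have hbC : (b : ℂ) ≠ 0 := by exact_mod_cast hb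
    by_cases ha : a = 0
    · have ha0 : (a : ℂ) = 0 := by exact_mod_cast ha
      refine hirrat y hy (c / b) ?_
      push_cast
      exact (eq_div_iff hbC).2 (by linear_combination hab - x * ha0)
    have haC : (a : ℂ) ≠ 0 := by exact_mod_cast ha
    -- φ u := c/b - (a/b) u satisfies φ x = y
    have hφx : (c : ℂ) / b - (a : ℂ) / b * x = y := by
      have hy2 : y = ((c : ℂ) - (a : ℂ) * x) / (b : ℂ) :=
        (eq_div_iff hbC).2 (by linear_combination hab)
      rw [hy2]; ring
    -- converting φ-equations to linear relations
    have lin : ∀ u v : ℂ, (c : ℂ) / b - (a : ℂ) / b * u = v →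
        (a : ℂ) * u + (b : ℂ) * v = (c : ℂ) := by
      intro u v h
      rw [← h]
      field_simp
      ring
    have h1 := hmem _ (hstep a b c y hy hb x y hx hy hab)
    have h2 := hmem _ (hstep a b c z hz hb x y hx hy hab)
    have hinj : ∀ u v : ℂ, (c : ℂ) / b - (a : ℂ) / b * u = (c : ℂ) / b - (a : ℂ) / b * v →
        u = v := by
      intro u v huv
      have h0 : (a : ℂ) / b * (u - v) = 0 := by linear_combination -huv
      rcases mul_eq_zero.1 h0 with h | h
      · exact absurd h (div_ne_zero haC hbC)
      · exact sub_eq_zero.1 h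
    rcases h1 with hyx | hyy | hyz'
    · -- φ y = x : then a = b, and z is rational, contradiction
      have e : (a : ℂ) * y + (b : ℂ) * x = (c : ℂ) := lin y x hyx
      have hd : ((a - b : ℚ) : ℂ) * (x - y) = 0 := by push_cast; linear_combination hab - e
      rcases mul_eq_zero.1 hd with h | h
      · have hba : b = a := by
          have : ((a - b : ℚ) : ℂ) = ((0 : ℚ) : ℂ) := by rw [h]; norm_num
          have := Rat.cast_injective (α := ℂ) this
          linarith [sub_eq_zero.1 this]
        have hba' : (b : ℂ) = (a : ℂ) := by exact_mod_cast hba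
        refine hirrat z hz ((a * t - c) / a) ?_
        push_cast
        refine (eq_div_iff haC).2 ?_
        linear_combination (a : ℂ) * ht - hab + y * hba'
      · exact hxy (sub_eq_zero.1 h)
    · -- φ y = y : then a + b = 0 and c = 0, so x = y, contradiction
      have e : (a : ℂ) * y + (b : ℂ) * y = (c : ℂ) := lin y y hyy
      by_cases hab0 : a + b = 0
      · have hab0' : (a : ℂ) + (b : ℂ) = 0 := by exact_mod_cast hab0
        have hc0 : (c : ℂ) = 0 := by linear_combination y * hab0' - e
        have hxy0 : (a : ℂ) * (x - y) = 0 := by linear_combination hab - y * hab0' + hc0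
        rcases mul_eq_zero.1 hxy0 with h | h
        · exact haC h
        · exact hxy (sub_eq_zero.1 h)
      · have habC : ((a + b : ℚ) : ℂ) ≠ 0 := by exact_mod_cast hab0
        refine hirrat y hy (c / (a + b)) ?_
        push_cast
        refine (eq_div_iff (by push_cast at habC ⊢; exact habC)).2 ?_
        linear_combination e
    · -- φ y = z : then φ z = x, a³ + b³ = 0, etc.
      have emid : (a : ℂ) * y + (b : ℂ) * z = (c : ℂ) := lin y z hyz'
      have hzx : (c : ℂ) / b - (a : ℂ) / b * z = x := by
        rcases h2 with h | h | h
        · exact h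
        · exact absurd (hinj z x (by rw [h, hφx])) (Ne.symm hxz)
        · exact absurd (hinj z y (by rw [h, hyz'])) (Ne.symm hyz)
      have e3 : (a : ℂ) * z + (b : ℂ) * x = (c : ℂ) := lin z x hzx
      have hcube : ((a ^ 3 + b ^ 3 : ℚ) : ℂ) * ((x - y) * (y - z) * (z - x)) = 0 := by
        push_cast
        linear_combination ((a : ℂ) ^ 2 * (y - z) * (z - x) - (b : ℂ) ^ 2 * (y - z) * (z - x)) * hab
          + (-(a : ℂ) ^ 2 * (y - z) * (z - x) - (a : ℂ) * (b : ℂ) * (y - z) * (z - x)) * emid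
          + ((a : ℂ) * (b : ℂ) * (y - z) * (z - x) + (b : ℂ) ^ 2 * (y - z) * (z - x)) * e3
      have hprod : ((x - y) * (y - z) * (z - x)) ≠ 0 := by
        refine mul_ne_zero (mul_ne_zero ?_ ?_) ?_ <;> rw [sub_ne_zero]
        · exact hxy
        · exact hyz
        · exact Ne.symm hxz
      have hcubeQ : a ^ 3 + b ^ 3 = 0 := by
        have := (mul_eq_zero.1 hcube).resolve_right hprod
        exact_mod_cast this
      have hfac : (a + b) * (a ^ 2 - a * b + b ^ 2) = 0 := by linear_combination hcubeQ
      have hab0 : a + b = 0 := by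
        rcases mul_eq_zero.1 hfac with h | h
        · exact h
        · exfalso; apply ha; nlinarith [sq_nonneg (a - b), sq_nonneg (a + b)]
      have hab0' : (a : ℂ) + (b : ℂ) = 0 := by exact_mod_cast hab0
      have hc0 : (c : ℂ) = 0 := by
        linear_combination (-hab - emid - e3 + (x + y + z) * hab0') / 3
      have hxy0 : (a : ℂ) * (x - y) = 0 := by linear_combination hab - y * hab0' + hc0
      rcases mul_eq_zero.1 hxy0 with h | h
      · exact haC h
      · exact hxy (sub_eq_zero.1 h)
end

section
/- Let p be an odd prime and let ε = 1 if p ≡ 3 (mod 4), ε = 2 if p ≡ 5 (mod 8), and ε = ℓ if p ≡ 1 (mod 8), where ℓ is a prime with ℓ ≡ 3 (mod 4) and ℓ a non-square modulo p. Then the quaternion algebra (−ε, −p / Q) is a division algebra ramified exactly at p and at the infinite place. -/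
open scoped Quaternion


variable {K : Type*} [Field K] {e P : K}

/-- norm form value of a quaternion -/
def qnf (e P : K) (x : ℍ[K, -e, -P]) : K :=
  x.re^2 + e*x.imI^2 + P*x.imJ^2 + e*P*x.imK^2

theorem qmul_star (x : ℍ[K, -e, -P]) :
    x * star x = ((qnf e P x : K) : ℍ[K, -e, -P]) := by
  ext <;> simp [qnf, sq] <;> ring

theorem qstar_mul (x : ℍ[K, -e, -P]) :
    star x * x = ((qnf e P x : K) : ℍ[K, -e, -P]) := by
  ext <;> simp [qnf, sq] <;> ring

theorem qIsUnit (x : ℍ[K, -e, -P]) (h : qnf e P x ≠ 0) : IsUnit x := by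
  have key : (qnf e P x)⁻¹ • ((qnf e P x : K) : ℍ[K, -e, -P]) = 1 := by
    ext <;> simp [inv_mul_cancel₀ h]
  refine ⟨⟨x, (qnf e P x)⁻¹ • star x, ?_, ?_⟩, rfl⟩
  · rw [mul_smul_comm, qmul_star, key]
  · rw [smul_mul_assoc, qstar_mul, key]

theorem qNotUnit (x : ℍ[K, -e, -P]) (hx : x ≠ 0) (h : qnf e P x = 0) : ¬IsUnit x := by
  rintro ⟨u, rfl⟩
  have h1 : (u : ℍ[K, -e, -P]) * star (u : ℍ[K, -e, -P]) = 0 := by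
    rw [qmul_star, h]; simp
  have h2 : star (u : ℍ[K, -e, -P]) = 0 := by
    calc star (u : ℍ[K, -e, -P]) = ↑u⁻¹ * (↑u * star (u : ℍ[K, -e, -P])) := by
          rw [← mul_assoc]; simp
      _ = 0 := by rw [h1, mul_zero]
  exact hx (by simpa using congrArg star h2)

theorem qDivision (hani : ∀ a b c d : K,
    a^2 + e*b^2 + P*c^2 + e*P*d^2 = 0 → a = 0 ∧ b = 0 ∧ c = 0 ∧ d = 0) :
    ∀ x : ℍ[K, -e, -P], x ≠ 0 → IsUnit x := by
  intro x hx
  refine qIsUnit x fun h => hx ?_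
  obtain ⟨h1, h2, h3, h4⟩ := hani _ _ _ _ h
  ext <;> assumption

theorem qZeroDiv {a b c d : K} (h : a^2 + e*b^2 + P*c^2 + e*P*d^2 = 0)
    (hne : ¬(a = 0 ∧ b = 0 ∧ c = 0 ∧ d = 0)) :
    ∃ x : ℍ[K, -e, -P], x ≠ 0 ∧ ¬IsUnit x := by
  refine ⟨⟨a, b, c, d⟩, fun h0 => hne ?_, qNotUnit _ (fun h0 => hne ?_) h⟩ <;>
  · rw [QuaternionAlgebra.ext_iff] at h0
    simpa using h0


theorem aniso_ordered {K : Type*} [Field K] [LinearOrder K] [IsStrictOrderedRing K] {e P : K} (he : 0 < e) (hP : 0 < P) :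
    ∀ a b c d : K, a^2 + e*b^2 + P*c^2 + e*P*d^2 = 0 → a = 0 ∧ b = 0 ∧ c = 0 ∧ d = 0 := by
  intro a b c d h
  have hints : 0 ≤ e*b^2 ∧ 0 ≤ P*c^2 ∧ 0 ≤ e*P*d^2 ∧ 0 ≤ a^2 :=
    ⟨mul_nonneg he.le (sq_nonneg b), mul_nonneg hP.le (sq_nonneg c),
      mul_nonneg (mul_nonneg he.le hP.le) (sq_nonneg d), sq_nonneg a⟩
  obtain ⟨h1, h2, h3, h4⟩ := hints
  have ha : a^2 = 0 := by nlinarith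
  have hb : e*b^2 = 0 := by nlinarith
  have hc : P*c^2 = 0 := by nlinarith
  have hd : e*P*d^2 = 0 := by nlinarith
  have hb : b^2 = 0 := (mul_eq_zero.mp hb).resolve_left he.ne'
  have hc : c^2 = 0 := (mul_eq_zero.mp hc).resolve_left hP.ne'
  have hd : d^2 = 0 := (mul_eq_zero.mp hd).resolve_left (mul_pos he hP).ne'
  exact ⟨by simpa using ha, by simpa using hb, by simpa using hc, by simpa using hd⟩

section padic
variable {p : ℕ} [hp : Fact p.Prime] {E : ℕ}

theorem zmod_step (hns : ¬IsSquare (-(E : ZMod p))) {a b : ZMod p}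
    (h : a^2 + E*b^2 = 0) : a = 0 ∧ b = 0 := by
  by_cases hb : b = 0
  · subst hb
    refine ⟨?_, rfl⟩
    have h2 : a^2 = 0 := by linear_combination h
    exact pow_eq_zero_iff two_ne_zero |>.mp h2
  · exact (hns ⟨a * b⁻¹, by field_simp; linear_combination -h⟩).elim

theorem toZMod_zero_iff (x : ℤ_[p]) : PadicInt.toZMod x = 0 ↔ (p:ℤ_[p]) ∣ x := by
  rw [← Ideal.mem_span_singleton, ← PadicInt.maximalIdeal_eq_span_p,
    ← PadicInt.ker_toZMod, RingHom.mem_ker]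

theorem padic_dvd_step (hns : ¬IsSquare (-(E : ZMod p))) {a b c d : ℤ_[p]}
    (h : a^2 + E*b^2 + p*c^2 + E*p*d^2 = 0) :
    (p:ℤ_[p]) ∣ a ∧ (p:ℤ_[p]) ∣ b ∧ (p:ℤ_[p]) ∣ c ∧ (p:ℤ_[p]) ∣ d := by
  have h1 : (PadicInt.toZMod a)^2 + E*(PadicInt.toZMod b)^2 = 0 := by
    have := congrArg PadicInt.toZMod h
    simpa [ZMod.natCast_self] using this
  obtain ⟨ha, hb⟩ := zmod_step hns h1
  obtain ⟨a', rfl⟩ := (toZMod_zero_iff a).mp ha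
  obtain ⟨b', rfl⟩ := (toZMod_zero_iff b).mp hb
  have hp0 : (p:ℤ_[p]) ≠ 0 := Nat.cast_ne_zero.mpr hp.out.ne_zero
  have h2 : (p:ℤ_[p]) * (p*a'^2 + E*p*b'^2 + c^2 + E*d^2) = 0 := by linear_combination h
  have h3 : (p:ℤ_[p])*a'^2 + E*p*b'^2 + c^2 + E*d^2 = 0 := by
    rcases mul_eq_zero.mp h2 with h' | h'
    · exact absurd h' hp0
    · exact h'
  have h4 : (PadicInt.toZMod c)^2 + E*(PadicInt.toZMod d)^2 = 0 := by
    have := congrArg PadicInt.toZMod h3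
    simpa [ZMod.natCast_self] using this
  obtain ⟨hc, hd⟩ := zmod_step hns h4
  exact ⟨Dvd.intro a' rfl, Dvd.intro b' rfl, (toZMod_zero_iff c).mp hc,
    (toZMod_zero_iff d).mp hd⟩

theorem padic_zero_of_all_dvd {a : ℤ_[p]} (h : ∀ n : ℕ, (p:ℤ_[p])^n ∣ a) : a = 0 := by
  by_contra ha
  have hnorm : 0 < ‖a‖ := norm_pos_iff.mpr ha
  obtain ⟨k, hk⟩ := PadicInt.exists_pow_neg_lt p hnorm
  obtain ⟨t, rfl⟩ := h k
  have : ‖(p:ℤ_[p])^k * t‖ ≤ (p:ℝ)^(-(k:ℤ)) := by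
    rw [norm_mul, norm_pow, PadicInt.norm_p]
    calc ((p:ℝ)⁻¹)^k * ‖t‖ ≤ ((p:ℝ)⁻¹)^k * 1 := by
          gcongr; exact PadicInt.norm_le_one t
      _ = (p:ℝ)^(-(k:ℤ)) := by rw [mul_one, zpow_neg, zpow_natCast, inv_pow]
  linarith

theorem padicint_aniso (hns : ¬IsSquare (-(E : ZMod p))) {a b c d : ℤ_[p]}
    (h : a^2 + E*b^2 + p*c^2 + E*p*d^2 = 0) : a = 0 ∧ b = 0 ∧ c = 0 ∧ d = 0 := by
  have hp0 : (p:ℤ_[p]) ≠ 0 := Nat.cast_ne_zero.mpr hp.out.ne_zero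
  have key : ∀ n : ℕ, (p:ℤ_[p])^n ∣ a ∧ (p:ℤ_[p])^n ∣ b ∧ (p:ℤ_[p])^n ∣ c ∧ (p:ℤ_[p])^n ∣ d := by
    intro n
    induction n with
    | zero => simp
    | succ n ih =>
      obtain ⟨⟨a', rfl⟩, ⟨b', rfl⟩, ⟨c', rfl⟩, ⟨d', rfl⟩⟩ := ih
      have hpn : ((p:ℤ_[p])^n)^2 ≠ 0 := pow_ne_zero _ (pow_ne_zero _ hp0)
      have h2 : ((p:ℤ_[p])^n)^2 * (a'^2 + E*b'^2 + p*c'^2 + E*p*d'^2) = 0 := by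
        linear_combination h
      have h3 : a'^2 + E*b'^2 + (p:ℤ_[p])*c'^2 + E*p*d'^2 = 0 := by
        rcases mul_eq_zero.mp h2 with h' | h'
        · exact absurd h' hpn
        · linear_combination h'
      obtain ⟨ha, hb, hc, hd⟩ := padic_dvd_step hns h3
      obtain ⟨a'', rfl⟩ := ha
      obtain ⟨b'', rfl⟩ := hb
      obtain ⟨c'', rfl⟩ := hc
      obtain ⟨d'', rfl⟩ := hd
      exact ⟨⟨a'', by ring⟩, ⟨b'', by ring⟩, ⟨c'', by ring⟩, ⟨d'', by ring⟩⟩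
  exact ⟨padic_zero_of_all_dvd fun n => (key n).1, padic_zero_of_all_dvd fun n => (key n).2.1,
    padic_zero_of_all_dvd fun n => (key n).2.2.1, padic_zero_of_all_dvd fun n => (key n).2.2.2⟩
end padic


section padicQ
variable {p : ℕ} [hp : Fact p.Prime] {E : ℕ}

theorem padic_scale (x : ℚ_[p]) : ∃ n : ℕ, ∀ m : ℕ, n ≤ m → ‖x * p^m‖ ≤ 1 := by
  have hp1 : (1:ℝ) < p := by exact_mod_cast hp.out.one_lt
  obtain ⟨n, hn⟩ := pow_unbounded_of_one_lt ‖x‖ hp1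
  refine ⟨n, fun m hm => ?_⟩
  rw [norm_mul, norm_pow, Padic.norm_p]
  calc ‖x‖ * ((p:ℝ)⁻¹)^m ≤ (p:ℝ)^n * ((p:ℝ)⁻¹)^m := by gcongr
    _ = ((p:ℝ)⁻¹)^(m-n) := by
        rw [inv_pow, inv_pow, ← Nat.sub_add_cancel hm, pow_add]
        have hpp : (0:ℝ) < (p:ℝ)^n := by positivity
        field_simp
        rw [Nat.add_sub_cancel]
    _ ≤ 1 := by
        apply pow_le_one₀ (by positivity)
        rw [inv_le_one_iff₀]
        right; linarith

-- anisotropy over ℚ_[p], assuming it over ℤ_[p]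
theorem padic_aniso
    (hints : ∀ a b c d : ℤ_[p], a^2 + E*b^2 + p*c^2 + E*p*d^2 = 0 →
      a = 0 ∧ b = 0 ∧ c = 0 ∧ d = 0)
    (a b c d : ℚ_[p]) (h : a^2 + E*b^2 + p*c^2 + E*p*d^2 = 0) :
    a = 0 ∧ b = 0 ∧ c = 0 ∧ d = 0 := by
  obtain ⟨na, hna⟩ := padic_scale a
  obtain ⟨nb, hnb⟩ := padic_scale b
  obtain ⟨nc, hnc⟩ := padic_scale c
  obtain ⟨nd, hnd⟩ := padic_scale d
  set N := max (max na nb) (max nc nd) with hN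
  have hA := hna N (le_max_of_le_left (le_max_left _ _))
  have hB := hnb N (le_max_of_le_left (le_max_right _ _))
  have hC := hnc N (le_max_of_le_right (le_max_left _ _))
  have hD := hnd N (le_max_of_le_right (le_max_right _ _))
  set A : ℤ_[p] := ⟨a * p^N, hA⟩
  set B : ℤ_[p] := ⟨b * p^N, hB⟩
  set C : ℤ_[p] := ⟨c * p^N, hC⟩
  set D : ℤ_[p] := ⟨d * p^N, hD⟩
  have heq : A^2 + E*B^2 + p*C^2 + E*p*D^2 = 0 := by
    apply Subtype.coe_injective
    push_cast [A, B, C, D]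
    show (a * p^N)^2 + (E:ℚ_[p]) * (b*p^N)^2 + (p:ℚ_[p]) * (c*p^N)^2 + (E:ℚ_[p])*p*(d*p^N)^2 = 0
    linear_combination ((p:ℚ_[p])^N)^2 * h
  obtain ⟨h1, h2, h3, h4⟩ := hints A B C D heq
  have hpN : ((p:ℚ_[p]))^N ≠ 0 :=
    pow_ne_zero _ (Nat.cast_ne_zero.mpr hp.out.ne_zero)
  have e1 : a * p^N = 0 := congrArg Subtype.val h1
  have e2 : b * p^N = 0 := congrArg Subtype.val h2
  have e3 : c * p^N = 0 := congrArg Subtype.val h3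
  have e4 : d * p^N = 0 := congrArg Subtype.val h4
  exact ⟨by simpa [hpN] using e1, by simpa [hpN] using e2,
    by simpa [hpN] using e3, by simpa [hpN] using e4⟩
end padicQ


section hensel
variable {l : ℕ} [hl : Fact l.Prime]

theorem hensel_sq {u c a₀ : ℤ_[l]}
    (h : ‖u*a₀^2 + c‖ < ‖2*u*a₀‖^2) : ∃ z : ℤ_[l], u*z^2 + c = 0 := by
  have key := hensels_lemma (R := ℤ_[l]) (F := Polynomial.C u * Polynomial.X^2 + Polynomial.C c) (a := a₀) ?_
  · obtain ⟨z, hz, -⟩ := key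
    refine ⟨z, by simpa using hz⟩
  · have hd : (Polynomial.C u * Polynomial.X^2 + Polynomial.C c).derivative
        = Polynomial.C (2*u) * Polynomial.X := by
      simp [Polynomial.derivative_C_mul]
      rw [map_ofNat]
      ring
    rw [hd]
    simpa [mul_assoc] using h

theorem norm_one_of_toZMod_ne (x : ℤ_[l]) (h : PadicInt.toZMod x ≠ 0) : ‖x‖ = 1 := by
  have h1 : ¬ (‖x‖ < 1) := by
    rw [PadicInt.norm_lt_one_iff_dvd, ← Ideal.mem_span_singleton,
      ← PadicInt.maximalIdeal_eq_span_p, ← PadicInt.ker_toZMod, RingHom.mem_ker]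
    exact h
  exact le_antisymm (PadicInt.norm_le_one x) (not_lt.mp h1)

theorem norm_lt_of_toZMod_eq (x : ℤ_[l]) (h : PadicInt.toZMod x = 0) : ‖x‖ < 1 := by
  rw [PadicInt.norm_lt_one_iff_dvd, ← Ideal.mem_span_singleton,
    ← PadicInt.maximalIdeal_eq_span_p, ← PadicInt.ker_toZMod, RingHom.mem_ker]
  exact h

theorem toZMod_natCast (n : ℕ) : PadicInt.toZMod (n : ℤ_[l]) = (n : ZMod l) := by
  simp [map_natCast]

theorem toZMod_val_cast (a : ZMod l) : PadicInt.toZMod ((a.val : ℕ) : ℤ_[l]) = a := by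
  rw [toZMod_natCast, ZMod.natCast_val, ZMod.cast_id]
end hensel

section iso
variable {l : ℕ} [hl : Fact l.Prime]

theorem norm_le_of_dvd8 {x : ℤ_[2]} (h : (8:ℤ_[2]) ∣ x) : ‖x‖ ≤ 1/8 := by
  obtain ⟨t, rfl⟩ := h
  rw [norm_mul]
  have h8 : ‖(8:ℤ_[2])‖ = 1/8 := by
    have h2 : ‖(2:ℤ_[2])‖ = 1/2 := by
      rw [show ((2:ℤ_[2])) = (((2:ℕ)):ℤ_[2]) by norm_num, PadicInt.norm_p]
      norm_num
    rw [show ((8:ℤ_[2])) = (2:ℤ_[2])^3 by norm_num, norm_pow, h2]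
    norm_num
  rw [h8]
  calc (1/8 : ℝ) * ‖t‖ ≤ 1/8 * 1 := by gcongr; exact PadicInt.norm_le_one t
    _ = 1/8 := by norm_num

theorem mod8_eq (E p x y z : ℕ) :
    (E*x^2+p*y^2+E*p*z^2+1) % 8 = ((E%8)*x^2+(p%8)*y^2+(E%8)*(p%8)*z^2+1) % 8 := by
  have h1 : (E%8)*x^2+(p%8)*y^2+(E%8)*(p%8)*z^2+1 ≡ E*x^2+p*y^2+E*p*z^2+1 [MOD 8] :=
    ((((Nat.mod_modEq E 8).mul_right _).add ((Nat.mod_modEq p 8).mul_right _)).add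
      (((Nat.mod_modEq E 8).mul (Nat.mod_modEq p 8)).mul_right _)).add_right 1
  exact h1.symm

theorem isotropic_two (E p x y zc : ℕ)
    (hw : (E*x^2 + p*y^2 + E*p*zc^2 + 1) % 8 = 0) :
    ∃ a b c d : ℚ_[2], a^2+E*b^2+p*c^2+E*p*d^2 = 0 ∧ ¬(a=0 ∧ b=0 ∧ c=0 ∧ d=0) := by
  set S : ℤ_[2] := ((E*x^2+p*y^2+E*p*zc^2 : ℕ) : ℤ_[2]) with hS
  have hdvd : (8:ℤ_[2]) ∣ (1*1^2 + S) := by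
    have h1 : (8:ℕ) ∣ (E*x^2+p*y^2+E*p*zc^2+1) := Nat.dvd_of_mod_eq_zero hw
    have h2 : ((8:ℕ):ℤ_[2]) ∣ (((E*x^2+p*y^2+E*p*zc^2+1 : ℕ)):ℤ_[2]) := Nat.cast_dvd_cast h1
    have h3 : (((E*x^2+p*y^2+E*p*zc^2+1 : ℕ)):ℤ_[2]) = 1*1^2 + S := by push_cast [hS]; ring
    rw [h3] at h2
    exact_mod_cast h2
  obtain ⟨z, hz⟩ := hensel_sq (l := 2) (u := 1) (c := S) (a₀ := 1) (by
    calc ‖(1:ℤ_[2])*1^2 + S‖ ≤ 1/8 := norm_le_of_dvd8 hdvd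
      _ < ‖(2:ℤ_[2])*1*1‖^2 := by
          rw [mul_one, mul_one]
          have h2n : ‖(2:ℤ_[2])‖ = 1/2 := by
            rw [show ((2:ℤ_[2])) = (((2:ℕ)):ℤ_[2]) by norm_num, PadicInt.norm_p]
            norm_num
          rw [h2n]; norm_num)
  refine ⟨(z : ℚ_[2]), (x:ℚ_[2]), (y:ℚ_[2]), (zc:ℚ_[2]), ?_, ?_⟩
  · have h2 := congrArg (fun t : ℤ_[2] => (t : ℚ_[2])) hz
    push_cast [hS] at h2
    push_cast
    linear_combination h2
  · rintro ⟨-, hx, hy, hzc⟩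
    have hx0 : x = 0 := by exact_mod_cast hx
    have hy0 : y = 0 := by exact_mod_cast hy
    have hz0 : zc = 0 := by exact_mod_cast hzc
    rw [hx0, hy0, hz0] at hw
    simp at hw

theorem isotropic_odd (p E : ℕ) [Fact p.Prime] (hl2 : l ≠ 2)
    (hlE : ¬ (l ∣ E)) (hlp : l ≠ p) :
    ∃ a b c d : ℚ_[l], a^2+E*b^2+p*c^2+E*p*d^2 = 0 ∧ ¬(a=0 ∧ b=0 ∧ c=0 ∧ d=0) := by
  have hE0 : (E : ZMod l) ≠ 0 := by rwa [Ne, ZMod.natCast_eq_zero_iff]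
  have hp0 : (p : ZMod l) ≠ 0 := by
    rw [Ne, ZMod.natCast_eq_zero_iff]
    intro h
    exact hlp ((Nat.prime_dvd_prime_iff_eq hl.out Fact.out).mp h)
  have h20 : (2 : ZMod l) ≠ 0 := by
    have : ((2:ℕ) : ZMod l) ≠ 0 := by
      rw [Ne, ZMod.natCast_eq_zero_iff]
      intro h
      exact hl2 ((Nat.prime_dvd_prime_iff_eq hl.out Nat.prime_two).mp h)
    exact_mod_cast this
  have hcard : Fintype.card (ZMod l) % 2 = 1 := by
    rw [ZMod.card]; exact hl.out.eq_two_or_odd.resolve_left hl2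
  obtain ⟨a, b, hab⟩ := FiniteField.exists_root_sum_quadratic
    (f := (Polynomial.X^2 : Polynomial (ZMod l)))
    (g := Polynomial.C (E : ZMod l) * Polynomial.X^2 + Polynomial.C 0 * Polynomial.X
      + Polynomial.C (p : ZMod l))
    (by simpa using Polynomial.degree_X_pow (R := ZMod l) 2)
    (Polynomial.degree_quadratic hE0) hcard
  simp only [Polynomial.eval_add, Polynomial.eval_mul, Polynomial.eval_pow,
    Polynomial.eval_C, Polynomial.eval_X, Polynomial.map_zero, zero_mul, add_zero] at hab
  -- hab : a^2 + ((E:ZMod l)*b^2 + p) = 0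
  set A : ℤ_[l] := ((a.val : ℕ) : ℤ_[l]) with hA
  set B : ℤ_[l] := ((b.val : ℕ) : ℤ_[l]) with hB
  have hvA : PadicInt.toZMod A = a := toZMod_val_cast a
  have hvB : PadicInt.toZMod B = b := toZMod_val_cast b
  have hresid : PadicInt.toZMod (A^2 + ((E:ℤ_[l])*B^2 + (p:ℤ_[l]))) = 0 := by
    simp only [map_add, map_mul, map_pow, hvA, hvB]
    simp only [toZMod_natCast]
    linear_combination hab
  have hrnorm : ‖A^2 + ((E:ℤ_[l])*B^2 + (p:ℤ_[l]))‖ < 1 :=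
    norm_lt_of_toZMod_eq _ hresid
  have hnE : ‖(E:ℤ_[l])‖ = 1 := norm_one_of_toZMod_ne _ (by rwa [toZMod_natCast])
  have hn2 : ‖(2:ℤ_[l])‖ = 1 := norm_one_of_toZMod_ne _ (by
    rw [show ((2:ℤ_[l])) = ((2:ℕ):ℤ_[l]) by norm_num, toZMod_natCast]
    exact_mod_cast h20)
  by_cases ha : a = 0
  · -- use b variable
    have hb : b ≠ 0 := by
      intro hb0
      rw [ha, hb0] at hab
      simp at hab
      exact hp0 hab
    have hnB : ‖B‖ = 1 := norm_one_of_toZMod_ne _ (by rw [hB, toZMod_val_cast]; exact hb)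
    have hA0 : A = 0 := by rw [hA, ha]; simp
    obtain ⟨z, hz⟩ := hensel_sq (l := l) (u := (E:ℤ_[l])) (c := (p:ℤ_[l])) (a₀ := B) (by
      rw [norm_mul, norm_mul, hn2, hnE, hnB]
      norm_num
      calc ‖(E:ℤ_[l])*B^2 + (p:ℤ_[l])‖ = ‖A^2 + ((E:ℤ_[l])*B^2 + (p:ℤ_[l]))‖ := by
            rw [hA0]; ring_nf
        _ < 1 := hrnorm)
    refine ⟨0, (z : ℚ_[l]), 1, 0, ?_, ?_⟩
    · have h2 := congrArg (fun t : ℤ_[l] => (t : ℚ_[l])) hz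
      push_cast at h2
      push_cast
      linear_combination h2
    · rintro ⟨-, -, h1, -⟩; exact one_ne_zero h1
  · have hnA : ‖A‖ = 1 := norm_one_of_toZMod_ne _ (by rw [hA, toZMod_val_cast]; exact ha)
    obtain ⟨z, hz⟩ := hensel_sq (l := l) (u := 1) (c := (E:ℤ_[l])*B^2 + (p:ℤ_[l])) (a₀ := A) (by
      rw [norm_mul, norm_mul, hn2, hnA, norm_one]
      norm_num
      exact hrnorm)
    refine ⟨(z : ℚ_[l]), (B : ℚ_[l]), 1, 0, ?_, ?_⟩
    · have h2 := congrArg (fun t : ℤ_[l] => (t : ℚ_[l])) hz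
      push_cast at h2
      push_cast
      linear_combination h2
    · rintro ⟨-, -, h1, -⟩; exact one_ne_zero h1

theorem isotropic_qr (p : ℕ) [Fact p.Prime] (E : ℕ) (hl2 : l ≠ 2) (hlp : l ≠ p)
    (hsq : IsSquare (-((p:ℕ) : ZMod l))) :
    ∃ a b c d : ℚ_[l], a^2+E*b^2+p*c^2+E*p*d^2 = 0 ∧ ¬(a=0 ∧ b=0 ∧ c=0 ∧ d=0) := by
  have hp0 : (p : ZMod l) ≠ 0 := by
    rw [Ne, ZMod.natCast_eq_zero_iff]
    intro h
    exact hlp ((Nat.prime_dvd_prime_iff_eq hl.out Fact.out).mp h)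
  have h20 : ((2:ℕ) : ZMod l) ≠ 0 := by
    rw [Ne, ZMod.natCast_eq_zero_iff]
    intro h
    exact hl2 ((Nat.prime_dvd_prime_iff_eq hl.out Nat.prime_two).mp h)
  obtain ⟨t, ht⟩ := hsq
  have ht0 : t ≠ 0 := by
    intro h
    rw [h, mul_zero] at ht
    exact hp0 (neg_eq_zero.mp ht)
  have hn2 : ‖(2:ℤ_[l])‖ = 1 := norm_one_of_toZMod_ne _ (by
    rw [show ((2:ℤ_[l])) = ((2:ℕ):ℤ_[l]) by norm_num, toZMod_natCast]
    exact h20)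
  set T : ℤ_[l] := ((t.val : ℕ) : ℤ_[l]) with hT
  have hnT : ‖T‖ = 1 := norm_one_of_toZMod_ne _ (by rw [hT, toZMod_val_cast]; exact ht0)
  have hvT : PadicInt.toZMod T = t := toZMod_val_cast t
  have hresid : PadicInt.toZMod ((1:ℤ_[l])*T^2 + (p:ℤ_[l])) = 0 := by
    simp only [map_add, map_mul, map_pow, map_one, hvT]
    simp only [toZMod_natCast]
    linear_combination -ht
  obtain ⟨z, hz⟩ := hensel_sq (l := l) (u := 1) (c := (p:ℤ_[l])) (a₀ := T) (by
    rw [norm_mul, norm_mul, hn2, hnT, norm_one]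
    norm_num
    exact norm_lt_of_toZMod_eq _ (by simpa using hresid))
  refine ⟨(z : ℚ_[l]), 0, 1, 0, ?_, ?_⟩
  · have h2 := congrArg (fun x : ℤ_[l] => (x : ℚ_[l])) hz
    push_cast at h2
    push_cast
    linear_combination h2
  · rintro ⟨-, -, h1, -⟩; exact one_ne_zero h1
end iso


theorem nonsq_mul_nonsq {F : Type*} [Field F] [Fintype F] [DecidableEq F] {a b : F}
    (ha : ¬IsSquare a) (hb : ¬IsSquare b) (ha0 : a ≠ 0) (hb0 : b ≠ 0) : IsSquare (a*b) := by
  have h1 : quadraticChar F a = -1 := quadraticChar_neg_one_iff_not_isSquare.mpr ha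
  have h2 : quadraticChar F b = -1 := quadraticChar_neg_one_iff_not_isSquare.mpr hb
  have h3 : quadraticChar F (a*b) = 1 := by rw [map_mul, h1, h2]; norm_num
  exact (quadraticChar_one_iff_isSquare (mul_ne_zero ha0 hb0)).mp h3

theorem neg_eps_nonsquare (p : ℕ) [hp : Fact p.Prime] (hodd : p ≠ 2) (ε : ℕ)
    (hε₁ : p % 4 = 3 → ε = 1)
    (hε₂ : p % 8 = 5 → ε = 2)
    (hε₃ : p % 8 = 1 → ε.Prime ∧ ε % 4 = 3 ∧ ¬IsSquare (ε : ZMod p)) :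
    ¬IsSquare (-(ε : ZMod p)) := by
  have hp2 : p % 2 = 1 := hp.out.eq_two_or_odd.resolve_left hodd
  have h8 : p % 8 = 1 ∨ p % 8 = 3 ∨ p % 8 = 5 ∨ p % 8 = 7 := by omega
  rcases h8 with h8 | h8 | h8 | h8
  · obtain ⟨hprime, h4, hns⟩ := hε₃ h8
    rintro ⟨t, ht⟩
    have hsq1 : IsSquare (-1 : ZMod p) := ZMod.exists_sq_eq_neg_one_iff.mpr (by omega)
    obtain ⟨s, hs⟩ := hsq1
    exact hns ⟨s*t, by linear_combination (t*t)*hs - ht⟩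
  · have h1 : ε = 1 := hε₁ (by omega)
    subst h1
    intro h
    have := ZMod.exists_sq_eq_neg_one_iff.mp (by simpa using h)
    omega
  · have h1 : ε = 2 := hε₂ h8
    subst h1
    intro h
    have h' : IsSquare (-2 : ZMod p) := by
      have : ((2:ℕ) : ZMod p) = (2 : ZMod p) := by norm_num
      rwa [this] at h
    have := (ZMod.exists_sq_eq_neg_two_iff hodd).mp h'
    omega
  · have h1 : ε = 1 := hε₁ (by omega)
    subst h1
    intro h
    have := ZMod.exists_sq_eq_neg_one_iff.mp (by simpa using h)
    omega

theorem negp_square_qr {p ε : ℕ} [hp : Fact p.Prime] [he : Fact ε.Prime]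
    (hp4 : p % 4 = 1) (hε4 : ε % 4 = 3) (hεp : ε ≠ p)
    (hns : ¬IsSquare ((ε : ZMod p))) : IsSquare (-((p:ℕ) : ZMod ε)) := by
  have hε2 : ε ≠ 2 := by omega
  have h1 : ¬IsSquare ((p : ZMod ε)) := fun h =>
    hns ((ZMod.exists_sq_eq_prime_iff_of_mod_four_eq_one hp4 hε2).mpr h)
  have h2 : ¬IsSquare (-1 : ZMod ε) := fun h =>
    (ZMod.exists_sq_eq_neg_one_iff.mp h) hε4
  have hp0 : (p : ZMod ε) ≠ 0 := by
    rw [Ne, ZMod.natCast_eq_zero_iff]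
    intro h
    exact hεp ((Nat.prime_dvd_prime_iff_eq he.out hp.out).mp h)
  have hm0 : (-1 : ZMod ε) ≠ 0 := by
    have : (1 : ZMod ε) ≠ 0 := one_ne_zero
    simpa using this
  have := nonsq_mul_nonsq h2 h1 hm0 hp0
  rwa [neg_one_mul] at this


/-- Let `p` be an odd prime and let `ε = 1` if `p ≡ 3 (mod 4)`, `ε = 2` if `p ≡ 5 (mod 8)`,
and `ε = ℓ` a prime with `ℓ ≡ 3 (mod 4)` which is a non-square modulo `p` if
`p ≡ 1 (mod 8)`. Then the quaternion algebra `(−ε, −p / ℚ)` is a division algebra ramified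
exactly at `p` and at the infinite place: `(−ε,−p/ℚ) ⊗ ℚ_p` and `(−ε,−p/ℚ) ⊗ ℝ` are
division algebras, while `(−ε,−p/ℚ) ⊗ ℚ_ℓ` is not, for every prime `ℓ ≠ p`. -/
theorem quaternion_algebra_ramified_exactly_at_p_and_infty (p : ℕ) [hp : Fact p.Prime]
    (hodd : p ≠ 2) (ε : ℕ)
    (hε₁ : p % 4 = 3 → ε = 1)
    (hε₂ : p % 8 = 5 → ε = 2)
    (hε₃ : p % 8 = 1 → ε.Prime ∧ ε % 4 = 3 ∧ ¬IsSquare (ε : ZMod p)) :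
    (∀ x : ℍ[ℚ, -(ε : ℚ), -(p : ℚ)], x ≠ 0 → IsUnit x) ∧
    (∀ x : ℍ[ℝ, -(ε : ℝ), -(p : ℝ)], x ≠ 0 → IsUnit x) ∧
    (∀ x : ℍ[ℚ_[p], -(ε : ℚ_[p]), -(p : ℚ_[p])], x ≠ 0 → IsUnit x) ∧
    (∀ (ℓ : ℕ) [Fact ℓ.Prime], ℓ ≠ p →
      ∃ x : ℍ[ℚ_[ℓ], -(ε : ℚ_[ℓ]), -(p : ℚ_[ℓ])], x ≠ 0 ∧ ¬IsUnit x) := by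
  have hp2 : p % 2 = 1 := hp.out.eq_two_or_odd.resolve_left hodd
  have hεpos : 0 < ε := by
    rcases (by omega : p % 8 = 1 ∨ p % 8 = 3 ∨ p % 8 = 5 ∨ p % 8 = 7) with h8 | h8 | h8 | h8
    · have := (hε₃ h8).1.two_le; omega
    · have := hε₁ (by omega); omega
    · have := hε₂ h8; omega
    · have := hε₁ (by omega); omega
  have hppos : 0 < p := hp.out.pos
  have hns := neg_eps_nonsquare p hodd ε hε₁ hε₂ hε₃
  refine ⟨?_, ?_, ?_, ?_⟩
  · exact qDivision (aniso_ordered (by exact_mod_cast hεpos) (by exact_mod_cast hppos))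
  · exact qDivision (aniso_ordered (by exact_mod_cast hεpos) (by exact_mod_cast hppos))
  · exact qDivision (fun a b c d h =>
      padic_aniso (fun a b c d h => padicint_aniso hns h) a b c d h)
  · intro ℓ hℓ hℓp
    by_cases hl2 : ℓ = 2
    · subst hl2
      have hw : ∃ x y z : ℕ, (ε*x^2 + p*y^2 + ε*p*z^2 + 1) % 8 = 0 := by
        rcases (by omega : p % 8 = 1 ∨ p % 8 = 3 ∨ p % 8 = 5 ∨ p % 8 = 7) with h8 | h8 | h8 | h8
        · obtain ⟨hpr, h4, -⟩ := hε₃ h8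
          rcases (by omega : ε % 8 = 3 ∨ ε % 8 = 7) with hε8 | hε8
          · exact ⟨1, 1, 1, by rw [mod8_eq, hε8, h8]; norm_num⟩
          · exact ⟨1, 0, 0, by rw [mod8_eq, hε8, h8]; norm_num⟩
        · have he : ε = 1 := hε₁ (by omega)
          exact ⟨1, 1, 1, by rw [mod8_eq, he, h8]; norm_num⟩
        · have he : ε = 2 := hε₂ h8
          exact ⟨1, 1, 0, by rw [mod8_eq, he, h8]; norm_num⟩
        · have he : ε = 1 := hε₁ (by omega)
          exact ⟨0, 1, 0, by rw [mod8_eq, he, h8]; norm_num⟩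
      obtain ⟨x, y, z, hw⟩ := hw
      obtain ⟨a, b, c, d, heq, hne⟩ := isotropic_two ε p x y z hw
      exact qZeroDiv heq hne
    · by_cases hdvd : ℓ ∣ ε
      · have h8 : p % 8 = 1 := by
          rcases (by omega : p % 8 = 1 ∨ p % 8 = 3 ∨ p % 8 = 5 ∨ p % 8 = 7)
            with h8 | h8 | h8 | h8
          · exact h8
          · have he : ε = 1 := hε₁ (by omega)
            rw [he] at hdvd
            exact absurd (Nat.dvd_one.mp hdvd) hℓ.out.ne_one
          · have he : ε = 2 := hε₂ h8
            rw [he] at hdvd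
            exact absurd ((Nat.prime_dvd_prime_iff_eq hℓ.out Nat.prime_two).mp hdvd) hl2
          · have he : ε = 1 := hε₁ (by omega)
            rw [he] at hdvd
            exact absurd (Nat.dvd_one.mp hdvd) hℓ.out.ne_one
        obtain ⟨hpr, h4, hnse⟩ := hε₃ h8
        have hle : ℓ = ε := (Nat.prime_dvd_prime_iff_eq hℓ.out hpr).mp hdvd
        subst hle
        have hsq := negp_square_qr (p := p) (ε := ℓ) (by omega) h4 hℓp hnse
        obtain ⟨a, b, c, d, heq, hne⟩ := isotropic_qr p ℓ hl2 hℓp hsq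
        exact qZeroDiv heq hne
      · obtain ⟨a, b, c, d, heq, hne⟩ := isotropic_odd p ε hl2 hdvd hℓp
        exact qZeroDiv heq hne
end
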